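/- arXiv:1002.0756 — 3 statements merged into one kernel-verified Lean document; each statement's English description precedes it below -/
import Mathlib

section
/- Let h ∈ C²([0,∞)) solve h'' = G·h, h(0) = 0, h'(0) = 1, where G ∈ C⁰([0,∞)) is non-negative with ∫₀^∞ t·G(t) dt = b < ∞. Then for all t > 0: (i) h(t) > 0, (ii) h'(t) ≥ 1, (iii) h(t) ≥ t, and (iv) h'(t) ≤ e^b and h(t) ≤ e^b · t. -/
open Real MeasureTheory Set

private lemma mono_of_deriv_aux {f f' : ℝ → ℝ} {a b : ℝ}
    (hc : ContinuousOn f (Icc a b))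
    (hd : ∀ s ∈ Ioo a b, HasDerivAt f (f' s) s)
    (h0 : ∀ s ∈ Ioo a b, 0 ≤ f' s) : MonotoneOn f (Icc a b) := by
  apply monotoneOn_of_deriv_nonneg (convex_Icc a b) hc
  · intro x hx
    rw [interior_Icc] at hx
    exact (hd x hx).differentiableAt.differentiableWithinAt
  · intro x hx
    rw [interior_Icc] at hx
    rw [(hd x hx).deriv]
    exact h0 x hx

private lemma anti_of_deriv_aux {f f' : ℝ → ℝ} {a b : ℝ}
    (hc : ContinuousOn f (Icc a b))
    (hd : ∀ s ∈ Ioo a b, HasDerivAt f (f' s) s)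
    (h0 : ∀ s ∈ Ioo a b, f' s ≤ 0) : AntitoneOn f (Icc a b) := by
  apply antitoneOn_of_deriv_nonpos (convex_Icc a b) hc
  · intro x hx
    rw [interior_Icc] at hx
    exact (hd x hx).differentiableAt.differentiableWithinAt
  · intro x hx
    rw [interior_Icc] at hx
    rw [(hd x hx).deriv]
    exact h0 x hx

theorem warping_function_estimates
    (G h h' : ℝ → ℝ) (b : ℝ)
    (hG : ContinuousOn G (Ici 0)) (hGpos : ∀ t ∈ Ici (0 : ℝ), 0 ≤ G t)
    (hb : ∫ t in Ioi (0 : ℝ), t * G t = b)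
    (hbInt : IntegrableOn (fun t => t * G t) (Ioi 0))
    (hd1 : ∀ t ∈ Ici (0 : ℝ), HasDerivAt h (h' t) t)
    (hd2 : ∀ t ∈ Ici (0 : ℝ), HasDerivAt h' (G t * h t) t)
    (h0 : h 0 = 0) (h'0 : h' 0 = 1) :
    ∀ t > (0 : ℝ),
      0 < h t ∧ 1 ≤ h' t ∧ t ≤ h t ∧ h' t ≤ Real.exp b ∧ h t ≤ Real.exp b * t := by
  -- positivity of h near 0
  have hnear : ∃ δ > (0:ℝ), ∀ s, 0 < s → s < δ → 0 < h s := by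
    have h1 : HasDerivAt h 1 0 := by rw [← h'0]; exact hd1 0 Set.self_mem_Ici
    rw [hasDerivAt_iff_tendsto_slope] at h1
    have h2 : ∀ᶠ s in nhdsWithin (0:ℝ) ({(0:ℝ)}ᶜ), 0 < slope h 0 s :=
      h1.eventually (eventually_gt_nhds (by norm_num))
    have h3 : ∀ᶠ s in nhdsWithin (0:ℝ) (Ioi 0), 0 < slope h 0 s :=
      h2.filter_mono (nhdsWithin_mono _ (fun x hx => ne_of_gt hx))
    rw [eventually_nhdsWithin_iff] at h3
    obtain ⟨δ, hδpos, hδ⟩ := Metric.eventually_nhds_iff.mp h3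
    refine ⟨δ, hδpos, fun s hs hsδ => ?_⟩
    have hds : dist s 0 < δ := by
      rw [Real.dist_eq, sub_zero, abs_of_pos hs]; exact hsδ
    have hslope : 0 < slope h 0 s := hδ hds hs
    rw [slope_def_field, h0, sub_zero, sub_zero] at hslope
    have := mul_pos hslope hs
    rwa [div_mul_cancel₀ _ (ne_of_gt hs)] at this
  obtain ⟨δ, hδpos, hδ⟩ := hnear
  -- nonnegativity of h on [0,∞)
  have hnonneg : ∀ t, 0 ≤ t → 0 ≤ h t := by
    by_contra hcon
    push_neg at hcon
    obtain ⟨t₀, ht₀, ht₀neg⟩ := hcon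
    have ht₀pos : 0 < t₀ := by
      rcases eq_or_lt_of_le ht₀ with rfl | h
      · rw [h0] at ht₀neg; linarith
      · exact h
    set A := {t : ℝ | 0 < t ∧ h t ≤ 0} with hA
    have hAne : A.Nonempty := ⟨t₀, ht₀pos, ht₀neg.le⟩
    have hAbdd : BddBelow A := ⟨0, fun x hx => hx.1.le⟩
    set u := sInf A with hu
    have hAδ : ∀ a ∈ A, δ ≤ a := by
      intro a ha
      by_contra hlt
      push_neg at hlt
      exact absurd ha.2 (not_le.mpr (hδ a ha.1 hlt))
    have huδ : δ ≤ u := le_csInf hAne hAδ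
    have hu0 : 0 < u := lt_of_lt_of_le hδpos huδ
    have huclos : u ∈ closure A := csInf_mem_closure hAne hAbdd
    obtain ⟨x, hxA, hxlim⟩ := mem_closure_iff_seq_limit.mp huclos
    have hhu : h u ≤ 0 :=
      le_of_tendsto (((hd1 u hu0.le).continuousAt.tendsto).comp hxlim)
        (Filter.Eventually.of_forall fun n => (hxA n).2)
    have hIoo : ∀ s ∈ Ioo (0:ℝ) u, 0 ≤ h s := by
      intro s hs
      by_contra hneg
      push_neg at hneg
      have : u ≤ s := csInf_le hAbdd ⟨hs.1, hneg.le⟩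
      exact absurd hs.2 (not_lt.mpr this)
    have hconth : ContinuousOn h (Icc 0 u) :=
      fun s hs => ((hd1 s hs.1).continuousAt).continuousWithinAt
    have hconth' : ContinuousOn h' (Icc 0 u) :=
      fun s hs => ((hd2 s hs.1).continuousAt).continuousWithinAt
    have hmono' : MonotoneOn h' (Icc 0 u) := by
      apply mono_of_deriv_aux hconth' (fun s hs => hd2 s hs.1.le)
      intro s hs
      exact mul_nonneg (hGpos s hs.1.le) (hIoo s hs)
    have h'ge1 : ∀ s ∈ Ioo (0:ℝ) u, 1 ≤ h' s := by
      intro s hs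
      have := hmono' ⟨le_rfl, hu0.le⟩ ⟨hs.1.le, hs.2.le⟩ hs.1.le
      rwa [h'0] at this
    have hq : MonotoneOn (fun s => h s - s) (Icc 0 u) := by
      apply mono_of_deriv_aux (f' := fun s => h' s - 1)
        (hconth.sub continuousOn_id)
        (fun s hs => (hd1 s hs.1.le).sub (hasDerivAt_id s))
      intro s hs
      linarith [h'ge1 s hs]
    have := hq ⟨le_rfl, hu0.le⟩ ⟨hu0.le, le_rfl⟩ hu0.le
    simp only [h0, sub_zero] at this
    linarith
  intro t ht
  -- continuity on [0,t]
  have hconth : ContinuousOn h (Icc 0 t) :=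
    fun s hs => ((hd1 s hs.1).continuousAt).continuousWithinAt
  have hconth' : ContinuousOn h' (Icc 0 t) :=
    fun s hs => ((hd2 s hs.1).continuousAt).continuousWithinAt
  -- h' ≥ 1 on [0,t]
  have hmono' : MonotoneOn h' (Icc 0 t) := by
    apply mono_of_deriv_aux hconth' (fun s hs => hd2 s hs.1.le)
    intro s hs
    exact mul_nonneg (hGpos s hs.1.le) (hnonneg s hs.1.le)
  have h'ge1 : ∀ s ∈ Icc (0:ℝ) t, 1 ≤ h' s := by
    intro s hs
    have := hmono' ⟨le_rfl, ht.le⟩ hs hs.1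
    rwa [h'0] at this
  -- h ≥ t
  have hq : MonotoneOn (fun s => h s - s) (Icc 0 t) := by
    apply mono_of_deriv_aux (f' := fun s => h' s - 1)
      (hconth.sub continuousOn_id)
      (fun s hs => (hd1 s hs.1.le).sub (hasDerivAt_id s))
    intro s hs
    linarith [h'ge1 s ⟨hs.1.le, hs.2.le⟩]
  have hht : t ≤ h t := by
    have := hq ⟨le_rfl, ht.le⟩ ⟨ht.le, le_rfl⟩ ht.le
    simp only [h0, sub_zero] at this
    linarith
  have hhpos : 0 < h t := lt_of_lt_of_le ht hht
  -- ψ(s) = s h'(s) - h(s) ≥ 0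
  have hψd : ∀ s ∈ Ici (0:ℝ), HasDerivAt (fun s => s * h' s - h s) (s * (G s * h s)) s := by
    intro s hs
    have : HasDerivAt (fun s => s * h' s - h s) (1 * h' s + s * (G s * h s) - h' s) s :=
      ((hasDerivAt_id s).mul (hd2 s hs)).sub (hd1 s hs)
    convert this using 1
    ring
  have hψ : ∀ s ∈ Icc (0:ℝ) t, h s ≤ s * h' s := by
    have hm : MonotoneOn (fun s => s * h' s - h s) (Icc 0 t) := by
      apply mono_of_deriv_aux ((continuousOn_id.mul hconth').sub hconth)
        (fun s hs => hψd s hs.1.le)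
      intro s hs
      exact mul_nonneg hs.1.le (mul_nonneg (hGpos s hs.1.le) (hnonneg s hs.1.le))
    intro s hs
    have := hm ⟨le_rfl, ht.le⟩ hs hs.1
    simp only [zero_mul, h0, sub_zero] at this
    linarith
  -- the primitive g
  set g : ℝ → ℝ := fun x => ∫ s in (0:ℝ)..x, s * G s with hg
  have hcontsG : ∀ T, 0 ≤ T → ContinuousOn (fun s => s * G s) (Icc 0 T) :=
    fun T _ => continuousOn_id.mul (hG.mono (Icc_subset_Ici_self))
  have hcontAtsG : ∀ s : ℝ, 0 < s → ContinuousAt (fun s => s * G s) s := by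
    intro s hs
    exact continuousAt_id.mul (hG.continuousAt (Ici_mem_nhds hs))
  have hgcont : ContinuousOn g (Icc 0 t) := by
    have hint : IntegrableOn (fun s => s * G s) (Icc 0 t) :=
      (hcontsG t ht.le).integrableOn_compact isCompact_Icc
    have := intervalIntegral.continuousOn_primitive (a := 0) (b := t)
      (μ := volume) (f := fun s => s * G s) hint
    apply this.congr
    intro x hx
    rw [hg]
    simp only
    rw [intervalIntegral.integral_of_le hx.1]
  have hgd : ∀ s ∈ Ioo (0:ℝ) t, HasDerivAt g (s * G s) s := by
    intro s hs
    apply intervalIntegral.integral_hasDerivAt_right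
    · apply ContinuousOn.intervalIntegrable
      rw [uIcc_of_le hs.1.le]
      exact hcontsG s hs.1.le
    · exact ContinuousAt.stronglyMeasurableAtFilter isOpen_Ioi
        (fun x hx => hcontAtsG x hx) s hs.1
    · exact hcontAtsG s hs.1
  have hgle : ∀ s, 0 ≤ s → g s ≤ b := by
    intro s hs
    rw [← hb, hg]
    simp only
    rw [intervalIntegral.integral_of_le hs]
    apply setIntegral_mono_set hbInt
    · filter_upwards [ae_restrict_mem measurableSet_Ioi] with x hx
      exact mul_nonneg (le_of_lt hx) (hGpos x (mem_Ici.mpr (le_of_lt hx)))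
    · exact (Ioc_subset_Ioi_self).eventuallyLE
  have hg0 : g 0 = 0 := intervalIntegral.integral_same
  -- φ(s) = h'(s) exp(-g(s)) is antitone
  have hφanti : AntitoneOn (fun s => h' s * Real.exp (-(g s))) (Icc 0 t) := by
    apply anti_of_deriv_aux
      (f' := fun s => G s * h s * Real.exp (-(g s)) + h' s * (Real.exp (-(g s)) * -(s * G s)))
      (hconth'.mul ((hgcont.neg).rexp))
      (fun s hs => (hd2 s hs.1.le).mul ((hgd s hs).neg.exp))
    intro s hs
    have h1 : G s * h s ≤ s * G s * h' s := by
      calc G s * h s ≤ G s * (s * h' s) :=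
            mul_le_mul_of_nonneg_left (hψ s ⟨hs.1.le, hs.2.le⟩) (hGpos s hs.1.le)
        _ = s * G s * h' s := by ring
    have h2 : (0:ℝ) < Real.exp (-(g s)) := Real.exp_pos _
    nlinarith [h2]
  have hφ : ∀ s ∈ Icc (0:ℝ) t, h' s ≤ Real.exp (g s) := by
    intro s hs
    have h1 := hφanti ⟨le_rfl, ht.le⟩ hs hs.1
    simp only [h'0, hg0, neg_zero, Real.exp_zero, mul_one, one_mul] at h1
    calc h' s = h' s * Real.exp (-g s) * Real.exp (g s) := by
          rw [mul_assoc, ← Real.exp_add, neg_add_cancel, Real.exp_zero, mul_one]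
      _ ≤ 1 * Real.exp (g s) :=
          mul_le_mul_of_nonneg_right h1 (Real.exp_pos _).le
      _ = Real.exp (g s) := one_mul _
  have h'leb : ∀ s ∈ Icc (0:ℝ) t, h' s ≤ Real.exp b := by
    intro s hs
    exact le_trans (hφ s hs) (Real.exp_le_exp.mpr (hgle s hs.1))
  -- h t ≤ e^b t
  have hfinal : h t ≤ Real.exp b * t := by
    have hm : MonotoneOn (fun s => Real.exp b * s - h s) (Icc 0 t) := by
      apply mono_of_deriv_aux (f' := fun s => Real.exp b - h' s)
        ((continuousOn_const.mul continuousOn_id).sub hconth)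
        (fun s hs => by
          have := ((hasDerivAt_id s).const_mul (Real.exp b)).sub (hd1 s hs.1.le)
          rw [mul_one] at this
          exact this)
      intro s hs
      linarith [h'leb s ⟨hs.1.le, hs.2.le⟩]
    have := hm ⟨le_rfl, ht.le⟩ ⟨ht.le, le_rfl⟩ ht.le
    simp only [mul_zero, h0, sub_zero] at this
    linarith
  exact ⟨hhpos, h'ge1 t ⟨ht.le, le_rfl⟩, hht, h'leb t ⟨ht.le, le_rfl⟩, hfinal⟩
end

section
/- Let G ∈ C⁰([0,∞)) be non-negative with ∫₀^∞ t G(t) dt = b < ∞, and let h solve h'' = G h, h(0)=0, h'(0)=1. Then for every m ≥ 2 and t > 0, t^{m-1} ≤ h(t)^{m-1} ≤ e^{b(m-1)} t^{m-1}, and consequently ∫₀^t s^{m-1} ds ≤ ∫₀^t h(s)^{m-1} ds ≤ e^{b(m-1)} ∫₀^t s^{m-1} ds. -/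
open Real MeasureTheory Set

private lemma monoAux {f f' : ℝ → ℝ} {D : Set ℝ} (hD : Convex ℝ D)
    (hf : ∀ t ∈ D, HasDerivAt f (f' t) t)
    (hnn : ∀ t ∈ interior D, 0 ≤ f' t) : MonotoneOn f D :=
  monotoneOn_of_deriv_nonneg hD
    (fun t ht => (hf t ht).continuousAt.continuousWithinAt)
    (fun t ht => (hf t (interior_subset ht)).differentiableAt.differentiableWithinAt)
    (fun t ht => by rw [(hf t (interior_subset ht)).deriv]; exact hnn t ht)

private lemma antiAux2 {f f' : ℝ → ℝ} {D : Set ℝ} (hD : Convex ℝ D)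
    (hc : ContinuousOn f D)
    (hf : ∀ t ∈ interior D, HasDerivAt f (f' t) t)
    (hnp : ∀ t ∈ interior D, f' t ≤ 0) : AntitoneOn f D :=
  antitoneOn_of_deriv_nonpos hD hc
    (fun t ht => (hf t ht).differentiableAt.differentiableWithinAt)
    (fun t ht => by rw [(hf t ht).deriv]; exact hnp t ht)

private lemma stepA_aux {G h h' : ℝ → ℝ}
    (hGpos : ∀ t ∈ Ici (0:ℝ), 0 ≤ G t)
    (hd1 : ∀ t ∈ Ici (0:ℝ), HasDerivAt h (h' t) t)
    (hd2 : ∀ t ∈ Ici (0:ℝ), HasDerivAt h' (G t * h t) t)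
    (h0 : h 0 = 0) (h'0 : h' 0 = 1) :
    ∀ t ∈ Ici (0:ℝ), 1 ≤ h' t := by
  by_contra hc
  push_neg at hc
  obtain ⟨t0, ht0, ht0'⟩ := hc
  set S : Set ℝ := {t | 0 ≤ t ∧ h' t < 1} with hS
  have hne : S.Nonempty := ⟨t0, ht0, ht0'⟩
  have hbd : BddBelow S := ⟨0, fun x hx => hx.1⟩
  set c := sInf S with hcdef
  have hc0 : 0 ≤ c := le_csInf hne (fun x hx => hx.1)
  have fact1 : ∀ t, 0 ≤ t → t < c → 1 ≤ h' t := by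
    intro t ht htc
    by_contra hlt
    push_neg at hlt
    exact absurd (csInf_le hbd ⟨ht, hlt⟩) (not_le.2 htc)
  have hIcc : Icc (0:ℝ) c ⊆ Ici 0 := fun x hx => hx.1
  have hge : ∀ t ∈ Icc (0:ℝ) c, t ≤ h t := by
    intro t ht
    have hmono := monoAux (f := fun t => h t - t) (f' := fun t => h' t - 1) (convex_Icc 0 c)
      (fun s hs => (hd1 s (hIcc hs)).sub (hasDerivAt_id s))
      (by intro s hs; rw [interior_Icc] at hs
          exact sub_nonneg.2 (fact1 s hs.1.le hs.2))
    have h2 := hmono ⟨le_refl 0, hc0⟩ ht ht.1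
    simp only [h0, sub_zero] at h2
    linarith
  have hc1 : 1 ≤ h' c := by
    have hmono := monoAux (f := h') (f' := fun t => G t * h t) (convex_Icc 0 c)
      (fun s hs => hd2 s (hIcc hs))
      (by intro s hs; rw [interior_Icc] at hs
          exact mul_nonneg (hGpos s hs.1.le)
            (le_trans hs.1.le (hge s (Ioo_subset_Icc_self hs))))
    have h2 := hmono ⟨le_refl 0, hc0⟩ ⟨hc0, le_refl c⟩ hc0
    rwa [h'0] at h2
  have hcont : ContinuousAt h' c := (hd2 c hc0).continuousAt
  have hev : ∀ᶠ t in nhds c, (1:ℝ)/2 < h' t :=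
    hcont.eventually_const_lt (by linarith)
  obtain ⟨ε, hε, hball⟩ := Metric.eventually_nhds_iff.1 hev
  set δ := ε/2 with hδdef
  have hδ : 0 < δ := by positivity
  set d := c + δ with hddef
  have hIcc' : Icc c d ⊆ Ici (0:ℝ) := fun x hx => le_trans hc0 hx.1
  have half : ∀ t ∈ Icc c d, (1:ℝ)/2 ≤ h' t := by
    intro t ht
    refine le_of_lt (hball ?_)
    rw [Real.dist_eq, abs_of_nonneg (by linarith [ht.1])]
    have := ht.2
    simp only [hddef, hδdef] at this ⊢
    linarith
  have hposd : ∀ t ∈ Icc c d, 0 ≤ h t := by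
    intro t ht
    have hmono := monoAux (f := fun t => h t - t/2) (f' := fun t => h' t - 1/2) (convex_Icc c d)
      (fun s hs => (hd1 s (hIcc' hs)).sub ((hasDerivAt_id s).div_const 2))
      (by intro s hs; rw [interior_Icc] at hs
          exact sub_nonneg.2 (half s (Ioo_subset_Icc_self hs)))
    have h2 := hmono ⟨le_refl c, le_of_lt (by linarith)⟩ ht ht.1
    have h3 : c ≤ h c := hge c ⟨hc0, le_refl c⟩
    have h4 := ht.1
    nlinarith
  have hge1 : ∀ t ∈ Icc c d, 1 ≤ h' t := by
    intro t ht
    have hmono := monoAux (f := h') (f' := fun t => G t * h t) (convex_Icc c d)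
      (fun s hs => hd2 s (hIcc' hs))
      (by intro s hs; rw [interior_Icc] at hs
          exact mul_nonneg (hGpos s (hIcc' (Ioo_subset_Icc_self hs)))
            (hposd s (Ioo_subset_Icc_self hs)))
    exact le_trans hc1 (hmono ⟨le_refl c, le_of_lt (by linarith)⟩ ht ht.1)
  have : d ≤ c := by
    rw [hcdef]
    refine le_csInf hne ?_
    intro x hx
    by_contra hxd
    push_neg at hxd
    rcases lt_or_ge x c with hxc | hxc
    · exact absurd (fact1 x hx.1 hxc) (not_le.2 hx.2)
    · exact absurd (hge1 x ⟨hxc, hxd.le⟩) (not_le.2 hx.2)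
  linarith

private lemma key_aux (G h h' : ℝ → ℝ) (b : ℝ)
    (hG : ContinuousOn G (Ici 0)) (hGpos : ∀ t ∈ Ici (0 : ℝ), 0 ≤ G t)
    (hb : ∫ t in Ioi (0 : ℝ), t * G t = b)
    (hbInt : IntegrableOn (fun t => t * G t) (Ioi 0))
    (hd1 : ∀ t ∈ Ici (0 : ℝ), HasDerivAt h (h' t) t)
    (hd2 : ∀ t ∈ Ici (0 : ℝ), HasDerivAt h' (G t * h t) t)
    (h0 : h 0 = 0) (h'0 : h' 0 = 1) :
    ∀ t ∈ Ici (0:ℝ), t ≤ h t ∧ h t ≤ Real.exp b * t := by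
  have stepA := stepA_aux hGpos hd1 hd2 h0 h'0
  have stepB : ∀ t ∈ Ici (0:ℝ), t ≤ h t := by
    intro t ht
    have hmono := monoAux (f := fun t => h t - t) (f' := fun t => h' t - 1) (convex_Ici 0)
      (fun s hs => (hd1 s hs).sub (hasDerivAt_id s))
      (by intro s hs; rw [interior_Ici] at hs
          exact sub_nonneg.2 (stepA s (mem_Ici.2 hs.le)))
    have h2 := hmono (self_mem_Ici) ht ht
    simp only [h0, sub_zero] at h2
    linarith
  have stepC : ∀ t ∈ Ici (0:ℝ), h t ≤ t * h' t := by
    intro t ht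
    have hmono := monoAux (f := fun t => t * h' t - h t)
      (f' := fun t => (1 * h' t + t * (G t * h t)) - h' t) (convex_Ici 0)
      (fun s hs => (((hasDerivAt_id s).mul (hd2 s hs)).sub (hd1 s hs)))
      (by intro s hs; rw [interior_Ici] at hs
          have := mul_nonneg (mul_nonneg hs.le (hGpos s (mem_Ici.2 hs.le)))
            (le_trans hs.le (stepB s (mem_Ici.2 hs.le)))
          ring_nf
          ring_nf at this
          linarith)
    have h2 := hmono self_mem_Ici ht ht
    simp only [h0, zero_mul, sub_zero] at h2
    linarith
  have hfc : ContinuousOn (fun s => s * G s) (Ici 0) := continuousOn_id.mul hG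
  set F : ℝ → ℝ := fun x => ∫ s in (0:ℝ)..x, s * G s with hF
  have hint : ∀ x ∈ Ici (0:ℝ), IntervalIntegrable (fun s => s * G s) volume 0 x := by
    intro x hx
    apply ContinuousOn.intervalIntegrable
    apply hfc.mono
    rw [uIcc_of_le hx]
    exact fun y hy => hy.1
  have hFd : ∀ t ∈ Ioi (0:ℝ), HasDerivAt F (t * G t) t := by
    intro t ht
    exact intervalIntegral.integral_hasDerivAt_right (hint t (mem_Ici.2 (le_of_lt ht)))
      (ContinuousOn.stronglyMeasurableAtFilter isOpen_Ioi
        (hfc.mono (fun y hy => le_of_lt hy)) t ht)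
      (hfc.continuousAt (Ici_mem_nhds ht))
  have hFTb : ∀ T ∈ Ici (0:ℝ), F T ≤ b := by
    intro T hT
    rw [hF]
    simp only
    rw [intervalIntegral.integral_of_le hT, ← hb]
    apply setIntegral_mono_set hbInt
    · refine (ae_restrict_iff' measurableSet_Ioi).2 (Filter.Eventually.of_forall ?_)
      exact fun x hx => mul_nonneg (le_of_lt hx) (hGpos x (mem_Ici.2 (le_of_lt hx)))
    · exact HasSubset.Subset.eventuallyLE Ioc_subset_Ioi_self
  have stepD : ∀ T ∈ Ici (0:ℝ), h' T ≤ Real.exp b := by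
    intro T hT
    have hFc : ContinuousOn F (Icc 0 T) := by
      have : IntegrableOn (fun s => s * G s) (uIcc 0 T) := by
        rw [uIcc_of_le hT]
        exact (hfc.mono (fun y hy => hy.1)).integrableOn_Icc
      have := intervalIntegral.continuousOn_primitive_interval this
      rwa [uIcc_of_le hT] at this
    set φ : ℝ → ℝ := fun t => h' t * Real.exp (-F t) with hφ
    have hφc : ContinuousOn φ (Icc 0 T) :=
      (ContinuousOn.mono (fun s hs => ((hd2 s hs).continuousAt.continuousWithinAt :
          ContinuousWithinAt h' (Ici 0) s)) (fun y hy => hy.1) :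
        ContinuousOn h' (Icc 0 T)).mul (hFc.neg.rexp)
    have hanti := antiAux2 (f := φ)
      (f' := fun t => G t * h t * Real.exp (-F t) + h' t * (Real.exp (-F t) * -(t * G t)))
      (convex_Icc 0 T) hφc
      (by intro t ht; rw [interior_Icc] at ht
          exact (hd2 t ht.1.le).mul ((hFd t ht.1).neg.exp))
      (by intro t ht; rw [interior_Icc] at ht
          show G t * h t * Real.exp (-F t) + h' t * (Real.exp (-F t) * -(t * G t)) ≤ 0
          have h1 := stepC t ht.1.le
          have h2 := hGpos t ht.1.le
          have h3 := Real.exp_pos (-F t)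
          nlinarith [mul_nonneg (mul_nonneg h2 (sub_nonneg.2 h1)) h3.le])
    have h2 := hanti (left_mem_Icc.2 hT) (right_mem_Icc.2 hT) hT
    have hF0 : F 0 = 0 := intervalIntegral.integral_same
    rw [hφ] at h2
    simp only [hF0, neg_zero, Real.exp_zero, h'0, mul_one, one_mul] at h2
    have hexp : Real.exp (F T) ≤ Real.exp b := Real.exp_le_exp.2 (hFTb T hT)
    have h5 : h' T ≤ Real.exp (F T) := by
      rw [Real.exp_neg, ← div_eq_mul_inv] at h2
      exact (div_le_one (Real.exp_pos _)).1 h2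
    linarith
  intro t ht
  refine ⟨stepB t ht, ?_⟩
  have hmono := monoAux (f := fun t => Real.exp b * t - h t)
    (f' := fun t => Real.exp b - h' t) (convex_Ici 0)
    (fun s hs => by have := ((hasDerivAt_id s).const_mul (Real.exp b)).sub (hd1 s hs); simp only [mul_one] at this; exact this)
    (by intro s hs; rw [interior_Ici] at hs
        exact sub_nonneg.2 (stepD s (mem_Ici.2 hs.le)))
  have h2 := hmono self_mem_Ici ht ht
  simp only [h0, mul_zero, sub_zero] at h2
  linarith

theorem model_sphere_area_comparison
    (G h h' : ℝ → ℝ) (b m : ℝ) (hm : 2 ≤ m)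
    (hG : ContinuousOn G (Ici 0)) (hGpos : ∀ t ∈ Ici (0 : ℝ), 0 ≤ G t)
    (hb : ∫ t in Ioi (0 : ℝ), t * G t = b)
    (hbInt : IntegrableOn (fun t => t * G t) (Ioi 0))
    (hd1 : ∀ t ∈ Ici (0 : ℝ), HasDerivAt h (h' t) t)
    (hd2 : ∀ t ∈ Ici (0 : ℝ), HasDerivAt h' (G t * h t) t)
    (h0 : h 0 = 0) (h'0 : h' 0 = 1) :
    ∀ t > (0 : ℝ),
      (t ^ (m - 1) ≤ h t ^ (m - 1) ∧
        h t ^ (m - 1) ≤ Real.exp (b * (m - 1)) * t ^ (m - 1)) ∧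
      ((∫ s in (0 : ℝ)..t, s ^ (m - 1)) ≤ ∫ s in (0 : ℝ)..t, h s ^ (m - 1)) ∧
      (∫ s in (0 : ℝ)..t, h s ^ (m - 1)) ≤
        Real.exp (b * (m - 1)) * ∫ s in (0 : ℝ)..t, s ^ (m - 1) := by
  have key := key_aux G h h' b hG hGpos hb hbInt hd1 hd2 h0 h'0
  have he : (0:ℝ) ≤ m - 1 := by linarith
  -- pointwise bounds for all s ≥ 0
  have pw1 : ∀ s ∈ Ici (0:ℝ), s ^ (m-1) ≤ h s ^ (m-1) :=
    fun s hs => Real.rpow_le_rpow hs (key s hs).1 he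
  have pw2 : ∀ s ∈ Ici (0:ℝ), h s ^ (m-1) ≤ Real.exp (b * (m-1)) * s ^ (m-1) := by
    intro s hs
    have h1 : h s ^ (m-1) ≤ (Real.exp b * s) ^ (m-1) :=
      Real.rpow_le_rpow (le_trans hs (key s hs).1) (key s hs).2 he
    rwa [Real.mul_rpow (Real.exp_pos b).le hs, ← Real.exp_mul] at h1
  -- continuity of integrands
  have hc1 : Continuous (fun s : ℝ => s ^ (m-1)) := by
    apply continuous_iff_continuousAt.2
    intro x
    exact Real.continuousAt_rpow_const x (m-1) (Or.inr he)
  intro t ht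
  have htIcc : Icc (0:ℝ) t ⊆ Ici 0 := fun y hy => hy.1
  have hhc : ContinuousOn h (Icc 0 t) :=
    fun s hs => ((hd1 s (htIcc hs)).continuousAt.continuousWithinAt :
      ContinuousWithinAt h (Ici 0) s).mono htIcc
  have hc2 : ContinuousOn (fun s => h s ^ (m-1)) (Icc 0 t) := hc1.comp_continuousOn hhc
  have hint1 : IntervalIntegrable (fun s : ℝ => s ^ (m-1)) volume 0 t :=
    (hc1.continuousOn).intervalIntegrable
  have hint2 : IntervalIntegrable (fun s => h s ^ (m-1)) volume 0 t := by
    apply ContinuousOn.intervalIntegrable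
    rwa [uIcc_of_le ht.le]
  have hint3 : IntervalIntegrable (fun s : ℝ => Real.exp (b * (m-1)) * s ^ (m-1)) volume 0 t :=
    hint1.const_mul _
  refine ⟨⟨pw1 t ht.le, pw2 t ht.le⟩, ?_, ?_⟩
  · exact intervalIntegral.integral_mono_on ht.le hint1 hint2
      (fun s hs => pw1 s hs.1)
  · have := intervalIntegral.integral_mono_on ht.le hint2 hint3
      (fun s hs => pw2 s hs.1)
    rwa [intervalIntegral.integral_const_mul] at this
end

section
/- Let m > p > 1 and φ_λ as above. Then t^{m-2} φ_λ(t) |φ_λ'(t)|^{p-1} is integrable on (0,∞). -/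
open Real MeasureTheory Set

theorem weighted_flux_integrable
    (m p lam beta : ℝ) (hp : 1 < p) (hm : p < m) (hlam : 0 < lam) (hbeta : 0 < beta)
    (phi : ℝ → ℝ)
    (hphi : ∀ t, phi t = beta * lam ^ ((m - p) / p ^ 2) *
      (lam + t ^ (p / (p - 1))) ^ (1 - m / p)) :
    IntegrableOn (fun t => t ^ (m - 2) * phi t * |deriv phi t| ^ (p - 1)) (Ioi 0) := by
  have hp0 : (0:ℝ) < p := by linarith
  have hp1 : (0:ℝ) < p - 1 := by linarith
  set q : ℝ := p / (p - 1) with hq_def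
  set C : ℝ := beta * lam ^ ((m - p) / p ^ 2) with hC_def
  set α : ℝ := 1 - m / p with hα_def
  have hC : 0 < C := mul_pos hbeta (rpow_pos_of_pos hlam _)
  have hq1 : 1 < q := by
    rw [hq_def, lt_div_iff₀ hp1]; linarith
  have hq0 : 0 < q := by linarith
  have hmp : 1 < m / p := (one_lt_div hp0).mpr hm
  have hα : α < 0 := by rw [hα_def]; linarith
  have hqp : (q - 1) * (p - 1) = 1 := by
    rw [hq_def]; field_simp; ring
  set A : ℝ := C * q * (m / p - 1) with hA_def
  have hA : 0 < A := by
    apply mul_pos (mul_pos hC hq0); linarith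
  set K : ℝ := C * A ^ (p - 1) with hK_def
  set g : ℝ → ℝ := fun t => K * (t ^ (m - 1) * (lam + t ^ q) ^ (1 - m)) with hg_def
  have hbase : ∀ t : ℝ, 0 < t → 0 < lam + t ^ q := fun t ht => by positivity
  have hderiv : ∀ t : ℝ, 0 < t →
      deriv phi t = C * (q * t ^ (q - 1) * α * (lam + t ^ q) ^ (α - 1)) := by
    intro t ht
    have h1 : HasDerivAt (fun x : ℝ => x ^ q) (q * t ^ (q - 1)) t :=
      Real.hasDerivAt_rpow_const (Or.inl ht.ne')
    have h2 : HasDerivAt (fun x : ℝ => lam + x ^ q) (q * t ^ (q - 1)) t :=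
      h1.const_add lam
    have h3 : HasDerivAt (fun x : ℝ => (lam + x ^ q) ^ α)
        (q * t ^ (q - 1) * α * (lam + t ^ q) ^ (α - 1)) t :=
      h2.rpow_const (Or.inl (hbase t ht).ne')
    have h4 : HasDerivAt phi (C * (q * t ^ (q - 1) * α * (lam + t ^ q) ^ (α - 1))) t := by
      have hfe : phi = fun x => C * (lam + x ^ q) ^ α := funext fun x => hphi x
      rw [hfe]; exact h3.const_mul C
    exact h4.deriv
  have habs : ∀ t : ℝ, 0 < t →
      |deriv phi t| = A * (t ^ (q - 1) * (lam + t ^ q) ^ (α - 1)) := by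
    intro t ht
    have hb := hbase t ht
    rw [hderiv t ht, abs_eq (by positivity)]
    right
    rw [hA_def, hα_def]; ring
  have heq : EqOn g (fun t => t ^ (m - 2) * phi t * |deriv phi t| ^ (p - 1)) (Ioi 0) := by
    intro t ht
    simp only [mem_Ioi] at ht
    have hb := hbase t ht
    simp only
    rw [hphi t, habs t ht]
    have h5 : (A * (t ^ (q - 1) * (lam + t ^ q) ^ (α - 1))) ^ (p - 1)
        = A ^ (p - 1) * (t ^ (q - 1)) ^ (p - 1) * ((lam + t ^ q) ^ (α - 1)) ^ (p - 1) := by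
      rw [mul_rpow hA.le (mul_nonneg (rpow_nonneg ht.le _) (rpow_nonneg hb.le _)),
        mul_rpow (rpow_nonneg ht.le _) (rpow_nonneg hb.le _), mul_assoc]
    rw [h5, ← Real.rpow_mul ht.le, ← Real.rpow_mul hb.le, hqp, rpow_one]
    have h6 : t ^ (m - 1) = t ^ (m - 2) * t := by
      rw [show m - 1 = (m - 2) + 1 by ring, rpow_add ht, rpow_one]
    have h7 : (lam + t ^ q) ^ (1 - m)
        = (lam + t ^ q) ^ α * (lam + t ^ q) ^ ((α - 1) * (p - 1)) := by
      rw [← rpow_add hb]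
      congr 1
      rw [hα_def]
      field_simp
      ring
    rw [hg_def]
    simp only
    rw [h6, h7, hK_def]
    ring
  have hgcont : ∀ s : Set ℝ, s ⊆ Ioi 0 → ContinuousOn g s := by
    intro s hs
    apply continuousOn_const.mul
    apply ContinuousOn.mul
    · exact continuousOn_id.rpow_const fun x hx => Or.inl (ne_of_gt (hs hx))
    · apply ContinuousOn.rpow_const
      · exact continuousOn_const.add
          (continuousOn_id.rpow_const fun x hx => Or.inl (ne_of_gt (hs hx)))
      · intro x hx; exact Or.inl (hbase x (hs hx)).ne'
  have hnorm : ∀ t : ℝ, 0 < t →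
      ‖g t‖ = |K| * (t ^ (m - 1) * (lam + t ^ q) ^ (1 - m)) := by
    intro t ht
    have hb := hbase t ht
    rw [hg_def]
    simp only [norm_eq_abs, abs_mul]
    rw [abs_of_nonneg (rpow_nonneg ht.le _), abs_of_nonneg (rpow_nonneg hb.le _)]
  have hg1 : IntegrableOn g (Ioc 0 1) := by
    apply Integrable.mono' (g := fun _ => |K| * lam ^ (1 - m))
    · exact integrableOn_const measure_Ioc_lt_top.ne
    · exact ((hgcont _ Ioc_subset_Ioi_self).aestronglyMeasurable measurableSet_Ioc)
    · rw [ae_restrict_iff' measurableSet_Ioc]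
      filter_upwards with t ht
      obtain ⟨ht0, ht1⟩ := ht
      have hb := hbase t ht0
      have hx1 : t ^ (m - 1) ≤ 1 := rpow_le_one ht0.le ht1 (by linarith)
      have hx2 : (lam + t ^ q) ^ (1 - m) ≤ lam ^ (1 - m) :=
        rpow_le_rpow_of_nonpos hlam (le_add_of_nonneg_right (rpow_nonneg ht0.le q)) (by linarith)
      rw [hnorm t ht0]
      apply mul_le_mul_of_nonneg_left _ (abs_nonneg K)
      calc t ^ (m - 1) * (lam + t ^ q) ^ (1 - m)
          ≤ 1 * lam ^ (1 - m) := mul_le_mul hx1 hx2 (rpow_nonneg hb.le _) zero_le_one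
        _ = lam ^ (1 - m) := one_mul _
  have ha : m - 1 + q * (1 - m) < -1 := by
    have hEq : m - 1 + q * (1 - m) = (1 - m) / (p - 1) := by
      rw [hq_def]; field_simp; ring
    rw [hEq, div_lt_iff₀ hp1]; nlinarith
  have hg2 : IntegrableOn g (Ioi 1) := by
    apply Integrable.mono' (g := fun t => |K| * t ^ (m - 1 + q * (1 - m)))
    · exact (integrableOn_Ioi_rpow_of_lt ha one_pos).const_mul |K|
    · exact ((hgcont (Ioi 1) fun x (hx : 1 < x) => (lt_trans one_pos hx : (0:ℝ) < x)).aestronglyMeasurable measurableSet_Ioi)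
    · rw [ae_restrict_iff' measurableSet_Ioi]
      filter_upwards with t ht
      simp only [mem_Ioi] at ht
      have ht0 : (0:ℝ) < t := by linarith
      have hb := hbase t ht0
      have hx2 : (lam + t ^ q) ^ (1 - m) ≤ (t ^ q) ^ (1 - m) :=
        rpow_le_rpow_of_nonpos (rpow_pos_of_pos ht0 q) (le_add_of_nonneg_left hlam.le)
          (by linarith)
      rw [hnorm t ht0]
      apply mul_le_mul_of_nonneg_left _ (abs_nonneg K)
      calc t ^ (m - 1) * (lam + t ^ q) ^ (1 - m)
          ≤ t ^ (m - 1) * (t ^ q) ^ (1 - m) :=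
            mul_le_mul_of_nonneg_left hx2 (rpow_nonneg ht0.le _)
        _ = t ^ (m - 1 + q * (1 - m)) := by
            rw [← Real.rpow_mul ht0.le, ← rpow_add ht0]
  have hg : IntegrableOn g (Ioi 0) := by
    rw [← Ioc_union_Ioi_eq_Ioi (zero_le_one : (0:ℝ) ≤ 1)]
    exact hg1.union hg2
  exact hg.congr_fun heq measurableSet_Ioi
end
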